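/- arXiv:2307.12795 — 2 statements merged into one kernel-verified Lean document; each statement's English description precedes it below -/
import Mathlib

section
/- Let g(P) = (1/12)∏_{i=1}^{N_r}(1 + Pλ_i/(4σ²))^{-1} + (1/4)∏_{i=1}^{N_r}(1 + Pλ_i/(3σ²))^{-1} with all λ_i > 0 and σ² > 0. Then lim_{P→∞} (-log₂ g(P))/(log₂ P) = N_r, i.e., the diversity order of the scheme equals N_r. -/
/-- The diversity order of the approximate APEP
g(P) = (1/12)∏_i(1 + Pλ_i/(4σ²))⁻¹ + (1/4)∏_i(1 + Pλ_i/(3σ²))⁻¹ equals N_r, i.e.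
lim_{P→∞} (-log₂ g(P))/(log₂ P) = N_r. -/
theorem srpm_diversity_order
    (Nr : ℕ) (hNr : 0 < Nr) (lamEig : Fin Nr → ℝ) (hlam : ∀ i, 0 < lamEig i)
    (σ2 : ℝ) (hσ : 0 < σ2)
    (g : ℝ → ℝ)
    (hg : ∀ P : ℝ, g P = (1 / 12) * ∏ i, (1 + P * lamEig i / (4 * σ2))⁻¹
        + (1 / 4) * ∏ i, (1 + P * lamEig i / (3 * σ2))⁻¹) :
    Filter.Tendsto (fun P : ℝ => (-Real.logb 2 (g P)) / Real.logb 2 P)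
      Filter.atTop (nhds (Nr : ℝ)) := by
  set c4 : Fin Nr → ℝ := fun i => lamEig i / (4 * σ2) with hc4
  set c3 : Fin Nr → ℝ := fun i => lamEig i / (3 * σ2) with hc3
  have hc4pos : ∀ i, 0 < c4 i := fun i => div_pos (hlam i) (by linarith)
  have hc3pos : ∀ i, 0 < c3 i := fun i => div_pos (hlam i) (by linarith)
  set F : ℝ → ℝ := fun x => (1/12) * ∏ i, (x + c4 i)⁻¹ + (1/4) * ∏ i, (x + c3 i)⁻¹ with hF
  have hFpos : ∀ x : ℝ, 0 ≤ x → 0 < F x := by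
    intro x hx
    have h1 : 0 < ∏ i, (x + c4 i)⁻¹ :=
      Finset.prod_pos (fun i _ => inv_pos.2 (by have := hc4pos i; linarith))
    have h2 : 0 < ∏ i, (x + c3 i)⁻¹ :=
      Finset.prod_pos (fun i _ => inv_pos.2 (by have := hc3pos i; linarith))
    have : (0:ℝ) < (1/12) * ∏ i, (x + c4 i)⁻¹ + (1/4) * ∏ i, (x + c3 i)⁻¹ :=
      add_pos (mul_pos (by norm_num) h1) (mul_pos (by norm_num) h2)
    simpa [hF] using this
  have htendF : Filter.Tendsto (fun P : ℝ => F P⁻¹) Filter.atTop (nhds (F 0)) := by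
    simp only [hF]
    apply Filter.Tendsto.add
    · apply Filter.Tendsto.const_mul
      apply tendsto_finset_prod
      intro i _
      exact (tendsto_inv_atTop_zero.add tendsto_const_nhds).inv₀
        (by have := hc4pos i; simp; linarith)
    · apply Filter.Tendsto.const_mul
      apply tendsto_finset_prod
      intro i _
      exact (tendsto_inv_atTop_zero.add tendsto_const_nhds).inv₀
        (by have := hc3pos i; simp; linarith)
  have hlog2 : Real.log 2 ≠ 0 := ne_of_gt (Real.log_pos one_lt_two)
  have key : ∀ᶠ P in Filter.atTop, (-Real.logb 2 (g P)) / Real.logb 2 P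
      = (Nr:ℝ) - Real.log (F P⁻¹) / Real.log P := by
    filter_upwards [Filter.eventually_gt_atTop 1] with P hP
    have hP0 : 0 < P := lt_trans one_pos hP
    have hlogP : 0 < Real.log P := Real.log_pos hP
    have hFP : 0 < F P⁻¹ := hFpos _ (by positivity)
    have hgP : g P = (P⁻¹)^Nr * F P⁻¹ := by
      rw [hg]
      have e4 : ∀ i : Fin Nr, (1 + P * lamEig i / (4 * σ2))⁻¹ = P⁻¹ * (P⁻¹ + c4 i)⁻¹ := by
        intro i
        rw [← mul_inv]
        congr 1
        rw [hc4]
        field_simp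
      have e3 : ∀ i : Fin Nr, (1 + P * lamEig i / (3 * σ2))⁻¹ = P⁻¹ * (P⁻¹ + c3 i)⁻¹ := by
        intro i
        rw [← mul_inv]
        congr 1
        rw [hc3]
        field_simp
      simp only [e4, e3, Finset.prod_mul_distrib, Finset.prod_const, Finset.card_univ,
        Fintype.card_fin, hF]
      ring
    have hglog : Real.log (g P) = -((Nr:ℝ) * Real.log P) + Real.log (F P⁻¹) := by
      rw [hgP, Real.log_mul (by positivity) hFP.ne', Real.log_pow, Real.log_inv]
      push_cast
      ring
    rw [Real.logb, Real.logb, hglog]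
    field_simp
    ring
  have hmain : Filter.Tendsto (fun P : ℝ => (Nr:ℝ) - Real.log (F P⁻¹) / Real.log P)
      Filter.atTop (nhds ((Nr:ℝ) - 0)) := by
    apply Filter.Tendsto.sub tendsto_const_nhds
    have h1 : Filter.Tendsto (fun P : ℝ => Real.log (F P⁻¹)) Filter.atTop
        (nhds (Real.log (F 0))) :=
      ((Real.continuousAt_log (hFpos 0 le_rfl).ne').tendsto).comp htendF
    have h2 : Filter.Tendsto (fun P : ℝ => (Real.log P)⁻¹) Filter.atTop (nhds 0) :=
      Real.tendsto_log_atTop.inv_tendsto_atTop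
    simpa [div_eq_mul_inv] using h1.mul h2
  rw [show (Nr:ℝ) = (Nr:ℝ) - 0 by ring]
  exact hmain.congr' (Filter.EventuallyEq.symm key)
end

section
/- For every x ≥ 0 and every partition 0 = θ_0 ≤ θ_1 ≤ ... ≤ θ_Q = π/2, the Gaussian Q-function satisfies Q(x) ≤ Σ_{i=1}^Q a_i e^{-b_i x²}, where a_i = (θ_i - θ_{i-1})/π and b_i = 1/(2 sin² θ_i). -/
open MeasureTheory Real Set Filter


/-- The Gaussian tail function Q(x) = ∫_x^∞ (1/√(2π)) e^{-t²/2} dt. -/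
noncomputable def gaussianQ (x : ℝ) : ℝ :=
  ∫ t in Set.Ioi x, (Real.sqrt (2 * Real.pi))⁻¹ * Real.exp (-t ^ 2 / 2)

namespace Craig

noncomputable def phi (t : ℝ) : ℝ := (Real.sqrt (2 * Real.pi))⁻¹ * Real.exp (-t ^ 2 / 2)

lemma continuous_phi : Continuous phi := by
  unfold phi
  fun_prop

lemma integrable_phi : Integrable phi := by
  have h : Integrable (fun t : ℝ => (Real.sqrt (2 * Real.pi))⁻¹ * Real.exp (-(1/2 : ℝ) * t ^ 2)) :=
    (integrable_exp_neg_mul_sq (by norm_num)).const_mul _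
  convert h using 2 with t
  unfold phi
  ring_nf

lemma sqrt_two_pi_pos : 0 < Real.sqrt (2 * Real.pi) :=
  Real.sqrt_pos.2 (by positivity)

lemma gaussianQ_zero : gaussianQ 0 = 1 / 2 := by
  unfold gaussianQ
  rw [MeasureTheory.integral_const_mul]
  have : ∀ t : ℝ, Real.exp (-t ^ 2 / 2) = Real.exp (-(1/2 : ℝ) * t ^ 2) := by
    intro t; ring_nf
  simp_rw [this]
  rw [integral_gaussian_Ioi]
  rw [show Real.pi / (1/2 : ℝ) = 2 * Real.pi by ring]
  rw [inv_mul_eq_div, div_div, div_eq_iff (by positivity)]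
  rw [← Real.sqrt_mul_self (le_of_lt sqrt_two_pi_pos)]
  ring

/-- the Craig integrand -/
noncomputable def g (x θ : ℝ) : ℝ := Real.exp (-x ^ 2 / (2 * Real.sin θ ^ 2))

noncomputable def g' (x θ : ℝ) : ℝ := -(x / Real.sin θ ^ 2 * g x θ)

noncomputable def S : Set ℝ := Set.Ioo 0 (Real.pi / 2)

lemma measurableSet_S : MeasurableSet S := measurableSet_Ioo

lemma sin_pos_of_mem_S {θ : ℝ} (hθ : θ ∈ S) : 0 < Real.sin θ :=
  Real.sin_pos_of_pos_of_lt_pi hθ.1 (hθ.2.trans (by linarith [Real.pi_pos]))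

lemma measurable_g (x : ℝ) : Measurable (g x) := by
  unfold g
  apply Real.measurable_exp.comp
  exact Measurable.div (by fun_prop) (by fun_prop)

lemma measurable_g' (x : ℝ) : Measurable (g' x) := by
  unfold g'
  exact ((Measurable.div measurable_const (by fun_prop)).mul (measurable_g x)).neg

lemma g_le_one (x θ : ℝ) : ‖g x θ‖ ≤ 1 := by
  unfold g
  rw [Real.norm_eq_abs, abs_of_pos (Real.exp_pos _)]
  rw [show (1:ℝ) = Real.exp 0 by simp]
  apply Real.exp_le_exp.2
  rw [neg_div, neg_nonpos]
  positivity

lemma integrableOn_g (x : ℝ) {s : Set ℝ} (hs : MeasurableSet s) (hb : volume s < ⊤) :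
    IntegrableOn (g x) s := by
  apply Integrable.mono' (g := fun _ => (1:ℝ))
  · exact integrableOn_const hb.ne (by simp)
  · exact ((measurable_g x).aestronglyMeasurable).restrict
  · exact Filter.Eventually.of_forall fun θ => g_le_one x θ

lemma hasDerivAt_g (θ : ℝ) (hθ : Real.sin θ ≠ 0) (x : ℝ) :
    HasDerivAt (fun y => g y θ) (g' x θ) x := by
  have hc : (2 * Real.sin θ ^ 2) ≠ 0 := by positivity
  have h1 : HasDerivAt (fun y : ℝ => -y ^ 2 / (2 * Real.sin θ ^ 2))
      (-(2 * x) / (2 * Real.sin θ ^ 2)) x := by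
    have := (hasDerivAt_pow 2 x).neg.div_const (2 * Real.sin θ ^ 2)
    simpa using this
  have h2 := h1.exp
  convert h2 using 1
  · rfl
  unfold g' g
  field_simp

-- key bound:  for 0 < x, sin θ > 0 :  ‖g' x θ‖ ≤ 2 / x
lemma g'_bound {x θ : ℝ} (hx : 0 < x) (hθ : 0 < Real.sin θ) : ‖g' x θ‖ ≤ 2 / x := by
  have hs : (0:ℝ) < Real.sin θ ^ 2 := by positivity
  unfold g' g
  set s := Real.sin θ ^ 2
  have ht : 0 < x ^ 2 / (2 * s) := by positivity
  set t := x ^ 2 / (2 * s) with htdef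
  have hexp : Real.exp (-x^2 / (2*s)) = Real.exp (-t) := by rw [neg_div]
  rw [norm_neg, Real.norm_eq_abs, hexp, abs_of_pos (by positivity)]
  -- x / s * exp (-t) ≤ 2 / x  since x/s = 2t/x and t * exp (-t) ≤ 1
  have h1 : t * Real.exp (-t) ≤ 1 := by
    rw [Real.exp_neg, ← div_eq_mul_inv, div_le_one (Real.exp_pos _)]
    linarith [Real.add_one_le_exp t]
  have hxs : x / s = 2 * t / x := by
    rw [htdef]; field_simp
  rw [hxs]
  calc 2 * t / x * Real.exp (-t) = (2 / x) * (t * Real.exp (-t)) := by ring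
    _ ≤ (2 / x) * 1 := by
        apply mul_le_mul_of_nonneg_left h1 (by positivity)
    _ = 2 / x := by ring
noncomputable def G (x : ℝ) : ℝ := ∫ θ in S, g x θ

lemma volume_S_lt_top : volume S < ⊤ := by
  unfold S
  rw [Real.volume_Ioo]
  exact ENNReal.ofReal_lt_top

instance : IsFiniteMeasure (volume.restrict S) :=
  ⟨by rw [Measure.restrict_apply_univ]; exact volume_S_lt_top⟩

lemma hasDerivAt_G {x : ℝ} (hx : 0 < x) :
    HasDerivAt G (∫ θ in S, g' x θ) x := by
  have hmem : ∀ᵐ θ ∂(volume.restrict S), θ ∈ S :=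
    ae_restrict_mem measurableSet_S
  have key := hasDerivAt_integral_of_dominated_loc_of_deriv_le
    (μ := volume.restrict S) (F := g) (F' := g') (x₀ := x)
    (bound := fun _ => 4 / x) (Metric.ball_mem_nhds x (half_pos hx))
    (Filter.Eventually.of_forall fun y => ((measurable_g y).aestronglyMeasurable).restrict)
    (integrableOn_g x measurableSet_S volume_S_lt_top)
    ((measurable_g' x).aestronglyMeasurable).restrict
    ?_ ?_ ?_
  · exact key.2
  · -- bound
    refine hmem.mono fun θ hθ => fun y hy => ?_
    have hsin := sin_pos_of_mem_S hθ
    have hy' : x / 2 < y := by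
      have := abs_lt.1 (by simpa [Metric.mem_ball, Real.dist_eq] using hy)
      linarith [this.1]
    have hypos : 0 < y := by linarith
    calc ‖g' y θ‖ ≤ 2 / y := g'_bound hypos hsin
      _ ≤ 4 / x := by
          rw [div_le_div_iff₀ hypos hx]
          nlinarith
  · exact integrable_const _
  · refine hmem.mono fun θ hθ => fun y _ => ?_
    exact hasDerivAt_g θ (ne_of_gt (sin_pos_of_mem_S hθ)) y

lemma continuousAt_G (x : ℝ) : ContinuousAt G x := by
  apply MeasureTheory.continuousAt_of_dominated (bound := fun _ => (1:ℝ))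
    (Filter.Eventually.of_forall fun y => ((measurable_g y).aestronglyMeasurable).restrict)
    (Filter.Eventually.of_forall fun y =>
      Filter.Eventually.of_forall fun θ => g_le_one y θ)
  · exact integrable_const _
  · refine (ae_restrict_mem measurableSet_S).mono fun θ hθ => ?_
    have hsin := sin_pos_of_mem_S hθ
    have : Continuous (fun y : ℝ => g y θ) := by
      unfold g
      have h2 : (2 * Real.sin θ ^ 2) ≠ 0 := by positivity
      fun_prop
    exact this.continuousAt

lemma G_zero : G 0 = Real.pi / 2 := by
  unfold G g
  simp only [ne_eq, OfNat.ofNat_ne_zero, not_false_eq_true, zero_pow, neg_zero, zero_div,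
    Real.exp_zero]
  rw [setIntegral_const]
  unfold S
  rw [measureReal_def, Real.volume_Ioo]
  rw [ENNReal.toReal_ofReal (by linarith [Real.pi_pos])]
  simp
lemma cos_pos_of_mem_S {θ : ℝ} (hθ : θ ∈ S) : 0 < Real.cos θ :=
  Real.cos_pos_of_mem_Ioo ⟨by linarith [hθ.1, Real.pi_pos], hθ.2⟩

/-- the substitution map u = x cot θ -/
noncomputable def f (x θ : ℝ) : ℝ := x * (Real.cos θ / Real.sin θ)

lemma f_hasDeriv {x θ : ℝ} (hθ : θ ∈ S) :
    HasDerivWithinAt (f x) (-(x / Real.sin θ ^ 2)) S θ := by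
  have hs := sin_pos_of_mem_S hθ
  have h := ((Real.hasDerivAt_cos θ).div (Real.hasDerivAt_sin θ) (ne_of_gt hs)).const_mul x
  refine h.hasDerivWithinAt.congr_deriv ?_
  have h1 : Real.sin θ ^ 2 + Real.cos θ ^ 2 = 1 := Real.sin_sq_add_cos_sq θ
  have h2 : -Real.sin θ * Real.sin θ - Real.cos θ * Real.cos θ = -1 := by
    linear_combination -h1
  rw [h2]
  ring

lemma f_injOn {x : ℝ} (hx : 0 < x) : InjOn (f x) S := by
  intro a ha b hb hab
  have hsa := sin_pos_of_mem_S ha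
  have hsb := sin_pos_of_mem_S hb
  have : Real.cos a / Real.sin a = Real.cos b / Real.sin b := by
    unfold f at hab
    exact mul_left_cancel₀ (ne_of_gt hx) hab
  have htan : Real.tan a = Real.tan b := by
    rw [Real.tan_eq_sin_div_cos, Real.tan_eq_sin_div_cos]
    have hca := cos_pos_of_mem_S ha
    have hcb := cos_pos_of_mem_S hb
    field_simp at this ⊢
    linarith [this]
  exact Real.injOn_tan ⟨by linarith [ha.1, Real.pi_pos], by linarith [ha.2]⟩
    ⟨by linarith [hb.1, Real.pi_pos], by linarith [hb.2]⟩ htan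

lemma f_image {x : ℝ} (hx : 0 < x) : f x '' S = Set.Ioi 0 := by
  ext u
  constructor
  · rintro ⟨θ, hθ, rfl⟩
    have := sin_pos_of_mem_S hθ
    have := cos_pos_of_mem_S hθ
    exact mul_pos hx (by positivity)
  · intro hu
    have hu' : (0:ℝ) < u := hu
    have hq : 0 < x / u := by positivity
    have hpos : 0 < Real.arctan (x / u) := by
      rw [← Real.arctan_zero]
      exact Real.arctan_strictMono hq
    refine ⟨Real.arctan (x / u), ⟨hpos, Real.arctan_lt_pi_div_two _⟩, ?_⟩
    unfold f
    rw [show Real.cos (Real.arctan (x/u)) / Real.sin (Real.arctan (x/u))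
        = (Real.tan (Real.arctan (x/u)))⁻¹ by
      rw [Real.tan_eq_sin_div_cos, inv_div]]
    rw [Real.tan_arctan]
    field_simp

lemma integral_g'_S {x : ℝ} (hx : 0 < x) :
    ∫ θ in S, g' x θ = -(Real.sqrt (2 * Real.pi) / 2 * Real.exp (-x ^ 2 / 2)) := by
  have key := integral_image_eq_integral_abs_deriv_smul (f' := fun θ => -(x / Real.sin θ ^ 2))
    measurableSet_S (fun θ hθ => f_hasDeriv hθ) (f_injOn hx)
    (fun u => Real.exp (-(x ^ 2 + u ^ 2) / 2))
  rw [f_image hx] at key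
  -- identify the RHS of key with -∫ g'
  have hrhs : ∀ θ ∈ S, |(-(x / Real.sin θ ^ 2))| • Real.exp (-(x ^ 2 + (f x θ) ^ 2) / 2)
      = -(g' x θ) := by
    intro θ hθ
    have hs := sin_pos_of_mem_S hθ
    have habs : |(-(x / Real.sin θ ^ 2))| = x / Real.sin θ ^ 2 := by
      rw [abs_neg, abs_of_pos (by positivity)]
    rw [habs, smul_eq_mul]
    unfold g' g f
    have h1 : Real.sin θ ^ 2 + Real.cos θ ^ 2 = 1 := Real.sin_sq_add_cos_sq θ
    have h2 : x ^ 2 + (x * (Real.cos θ / Real.sin θ)) ^ 2 = x ^ 2 / Real.sin θ ^ 2 := by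
      field_simp
      linear_combination h1
    have harg : -(x ^ 2 + (x * (Real.cos θ / Real.sin θ)) ^ 2) / 2
        = -x ^ 2 / (2 * Real.sin θ ^ 2) := by
      rw [h2]; ring
    rw [harg]
    ring
  rw [setIntegral_congr_fun measurableSet_S hrhs] at key
  rw [integral_neg] at key
  -- LHS of key: ∫ u in Ioi 0, exp (-(x^2+u^2)/2) = exp(-x^2/2) * sqrt(2π)/2
  have hlhs : ∫ u in Set.Ioi (0:ℝ), Real.exp (-(x ^ 2 + u ^ 2) / 2)
      = Real.exp (-x ^ 2 / 2) * (Real.sqrt (2 * Real.pi) / 2) := by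
    have : ∀ u : ℝ, Real.exp (-(x ^ 2 + u ^ 2) / 2)
        = Real.exp (-x ^ 2 / 2) * Real.exp (-(1/2:ℝ) * u ^ 2) := by
      intro u
      rw [← Real.exp_add]
      ring_nf
    simp_rw [this]
    rw [MeasureTheory.integral_const_mul, integral_gaussian_Ioi]
    rw [show Real.pi / (1/2 : ℝ) = 2 * Real.pi by ring]
  rw [hlhs] at key
  linarith [key]
lemma gaussianQ_eq_sub {x : ℝ} (hx : 0 ≤ x) :
    gaussianQ x = gaussianQ 0 - ∫ t in (0:ℝ)..x, phi t := by
  have hsplit : ∫ t in Set.Ioi (0:ℝ), phi t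
      = (∫ t in Set.Ioc 0 x, phi t) + ∫ t in Set.Ioi x, phi t := by
    rw [← MeasureTheory.setIntegral_union (Set.Ioc_disjoint_Ioi le_rfl) measurableSet_Ioi
      integrable_phi.integrableOn integrable_phi.integrableOn]
    rw [Set.Ioc_union_Ioi_eq_Ioi hx]
  have h0 : gaussianQ 0 = ∫ t in Set.Ioi (0:ℝ), phi t := rfl
  have hX : gaussianQ x = ∫ t in Set.Ioi x, phi t := rfl
  rw [h0, hX, hsplit, intervalIntegral.integral_of_le hx]
  ring

lemma hasDerivAt_gaussianQ {x : ℝ} (hx : 0 < x) :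
    HasDerivAt gaussianQ (-(phi x)) x := by
  have h1 : HasDerivAt (fun y => gaussianQ 0 - ∫ t in (0:ℝ)..y, phi t) (-(phi x)) x := by
    have h2 : HasDerivAt (fun y => ∫ t in (0:ℝ)..y, phi t) (phi x) x :=
      intervalIntegral.integral_hasDerivAt_right
        integrable_phi.intervalIntegrable
        (continuous_phi.stronglyMeasurableAtFilter _ _)
        continuous_phi.continuousAt
    have := (hasDerivAt_const x (gaussianQ 0)).sub h2
    rw [zero_sub] at this
    exact this
  apply h1.congr_of_eventuallyEq
  filter_upwards [eventually_gt_nhds hx] with y hy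
  exact gaussianQ_eq_sub hy.le

lemma tendsto_gaussianQ_zero_right :
    Filter.Tendsto gaussianQ (nhdsWithin 0 (Set.Ioi 0)) (nhds (gaussianQ 0)) := by
  have hcont : Continuous fun y => gaussianQ 0 - ∫ t in (0:ℝ)..y, phi t := by
    apply continuous_const.sub
    exact intervalIntegral.continuous_primitive
      (fun a b => integrable_phi.intervalIntegrable) 0
  have := hcont.continuousAt (x := 0)
  have h2 : Filter.Tendsto (fun y => gaussianQ 0 - ∫ t in (0:ℝ)..y, phi t)
      (nhdsWithin 0 (Set.Ioi 0)) (nhds (gaussianQ 0)) := by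
    have h3 := this.continuousWithinAt (s := Set.Ioi 0)
    unfold ContinuousWithinAt at h3
    convert h3 using 2
    simp
  apply h2.congr'
  filter_upwards [self_mem_nhdsWithin] with y hy
  exact (gaussianQ_eq_sub (le_of_lt hy)).symm
lemma hasDerivAt_h {y : ℝ} (hy : 0 < y) :
    HasDerivAt (fun z => gaussianQ z - Real.pi⁻¹ * G z) 0 y := by
  have h1 := hasDerivAt_gaussianQ hy
  have h2 := (hasDerivAt_G hy).const_mul Real.pi⁻¹
  rw [integral_g'_S hy] at h2
  have := h1.sub h2
  refine this.congr_deriv ?_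
  have hsq : Real.sqrt (2 * Real.pi) * Real.sqrt (2 * Real.pi) = 2 * Real.pi :=
    Real.mul_self_sqrt (by positivity)
  have hpi := Real.pi_pos
  have hs : Real.sqrt (2 * Real.pi) > 0 := Real.sqrt_pos.2 (by positivity)
  have key : Real.pi⁻¹ * (Real.sqrt (2 * Real.pi) / 2) * Real.sqrt (2 * Real.pi) = 1 := by
    have hre : Real.pi⁻¹ * (Real.sqrt (2 * Real.pi) / 2) * Real.sqrt (2 * Real.pi)
        = (Real.sqrt (2 * Real.pi) * Real.sqrt (2 * Real.pi)) * (Real.pi⁻¹ / 2) := by ring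
    rw [hre, hsq]
    field_simp
  have key2 : Real.pi⁻¹ * (Real.sqrt (2 * Real.pi) / 2) = (Real.sqrt (2 * Real.pi))⁻¹ :=
    eq_inv_of_mul_eq_one_left key
  unfold phi
  rw [← key2]
  ring

lemma craig_eq {x : ℝ} (hx : 0 ≤ x) : gaussianQ x = Real.pi⁻¹ * G x := by
  rcases eq_or_lt_of_le hx with h | hxpos
  · rw [← h, gaussianQ_zero, G_zero]
    field_simp
  set h : ℝ → ℝ := fun z => gaussianQ z - Real.pi⁻¹ * G z with hdef
  have hconst : ∀ ε ∈ Set.Ioc (0:ℝ) x, h x = h ε := by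
    intro ε hε
    have := constant_of_has_deriv_right_zero (f := h) (a := ε) (b := x)
      (fun y hy => ((hasDerivAt_h (lt_of_lt_of_le hε.1 hy.1)).continuousAt).continuousWithinAt)
      (fun y hy => (hasDerivAt_h (lt_of_lt_of_le hε.1 hy.1)).hasDerivWithinAt)
    exact this x ⟨hε.2, le_refl x⟩
  have hlim1 : Filter.Tendsto h (nhdsWithin 0 (Set.Ioi 0)) (nhds (h 0)) := by
    apply Filter.Tendsto.sub tendsto_gaussianQ_zero_right
    exact ((continuousAt_const.mul (continuousAt_G 0)).continuousWithinAt)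
  have hlim2 : Filter.Tendsto h (nhdsWithin 0 (Set.Ioi 0)) (nhds (h x)) := by
    apply Filter.Tendsto.congr' _ tendsto_const_nhds
    filter_upwards [Ioc_mem_nhdsGT_of_mem ⟨le_refl 0, hxpos⟩] with ε hε
    exact hconst ε hε
  have heq : h 0 = h x := tendsto_nhds_unique hlim1 hlim2
  have h0 : h 0 = 0 := by
    simp only [hdef, gaussianQ_zero, G_zero]
    field_simp
    norm_num
  have := heq.symm.trans h0
  simp only [hdef] at this
  linarith
lemma intervalIntegrable_g (x c d : ℝ) : IntervalIntegrable (g x) volume c d := by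
  rw [intervalIntegrable_iff]
  have hvol : volume (Set.uIoc c d) < ⊤ := by
    rw [Set.uIoc_eq_union]
    refine lt_of_le_of_lt (measure_union_le _ _) (ENNReal.add_lt_top.2 ⟨?_, ?_⟩)
    · rw [Real.volume_Ioc]; exact ENNReal.ofReal_lt_top
    · rw [Real.volume_Ioc]; exact ENNReal.ofReal_lt_top
  exact integrableOn_g x measurableSet_uIoc hvol

lemma interval_bound {x : ℝ} (hx : 0 ≤ x) {c d : ℝ} (h0c : 0 ≤ c) (hcd : c ≤ d)
    (hd : d ≤ Real.pi / 2) :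
    ∫ θ in c..d, g x θ ≤ (d - c) * Real.exp (-x ^ 2 / (2 * Real.sin d ^ 2)) := by
  rw [intervalIntegral.integral_of_le hcd]
  have hmono : ∀ θ ∈ Set.Ioc c d, g x θ ≤ Real.exp (-x ^ 2 / (2 * Real.sin d ^ 2)) := by
    intro θ hθ
    have hθpos : 0 < θ := lt_of_le_of_lt h0c hθ.1
    have hθd : θ ≤ d := hθ.2
    have hsinθ : 0 < Real.sin θ :=
      Real.sin_pos_of_pos_of_lt_pi hθpos (by linarith [Real.pi_pos])
    have hsin_le : Real.sin θ ≤ Real.sin d := by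
      apply Real.strictMonoOn_sin.monotoneOn ⟨by linarith [Real.pi_pos], by linarith⟩
        ⟨by linarith [Real.pi_pos], by linarith⟩ hθd
    have hsq : Real.sin θ ^ 2 ≤ Real.sin d ^ 2 := by nlinarith
    unfold g
    apply Real.exp_le_exp.2
    rw [neg_div, neg_div, neg_le_neg_iff]
    apply div_le_div_of_nonneg_left (by positivity) (by positivity)
    linarith
  calc ∫ θ in Set.Ioc c d, g x θ
      ≤ ∫ _ in Set.Ioc c d, Real.exp (-x ^ 2 / (2 * Real.sin d ^ 2)) := by
        apply setIntegral_mono_on (integrableOn_g x measurableSet_Ioc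
          (by rw [Real.volume_Ioc]; exact ENNReal.ofReal_lt_top))
          (integrableOn_const (by rw [Real.volume_Ioc]; exact ENNReal.ofReal_ne_top) enorm_ne_top)
          measurableSet_Ioc hmono
    _ = (d - c) * Real.exp (-x ^ 2 / (2 * Real.sin d ^ 2)) := by
        rw [setIntegral_const, measureReal_def, Real.volume_Ioc, ENNReal.toReal_ofReal (by linarith),
          smul_eq_mul]

end Craig

open Craig in
/-- For every x ≥ 0 and every partition 0 = θ_0 ≤ θ_1 ≤ ... ≤ θ_Q = π/2,
Q(x) ≤ Σ_{i=1}^Q a_i e^{-b_i x²} with a_i = (θ_i - θ_{i-1})/π and b_i = 1/(2 sin² θ_i). -/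
theorem gaussianQ_exponential_upper_bound
    (Qn : ℕ) (hQn : 0 < Qn) (θ : Fin (Qn + 1) → ℝ)
    (hmono : Monotone θ) (h0 : θ 0 = 0) (hlast : θ (Fin.last Qn) = Real.pi / 2)
    (x : ℝ) (hx : 0 ≤ x) :
    gaussianQ x ≤ ∑ i : Fin Qn,
      (θ i.succ - θ i.castSucc) / Real.pi
        * Real.exp (-(1 / (2 * Real.sin (θ i.succ) ^ 2)) * x ^ 2) := by
  have hpi := Real.pi_pos
  set a : ℕ → ℝ := fun k => θ ⟨min k Qn, Nat.lt_succ_of_le (min_le_right _ _)⟩ with hadef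
  have ha0 : a 0 = 0 := by
    have h1 : (⟨min 0 Qn, Nat.lt_succ_of_le (min_le_right _ _)⟩ : Fin (Qn + 1)) = 0 :=
      Fin.ext (by simp)
    rw [hadef]
    simp only []
    rw [h1, h0]
  have haQ : a Qn = Real.pi / 2 := by
    have h1 : (⟨min Qn Qn, Nat.lt_succ_of_le (min_le_right _ _)⟩ : Fin (Qn + 1)) = Fin.last Qn :=
      Fin.ext (by simp [Fin.last])
    rw [hadef]
    simp only []
    rw [h1, hlast]
  have hamono : Monotone a := by
    intro k l hkl
    apply hmono
    simp only [Fin.mk_le_mk]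
    exact min_le_min_right _ hkl
  have habound : ∀ k, 0 ≤ a k ∧ a k ≤ Real.pi / 2 := by
    intro k
    constructor
    · rw [← ha0]; exact hamono (Nat.zero_le k)
    · rw [← hlast]
      exact hmono (Fin.le_last _)
  have hak : ∀ k : Fin Qn, a k.val = θ k.castSucc := by
    intro k
    have h1 : (⟨min k.val Qn, Nat.lt_succ_of_le (min_le_right _ _)⟩ : Fin (Qn + 1))
        = k.castSucc := Fin.ext (by simp [min_eq_left (le_of_lt k.isLt)])
    rw [hadef]
    simp only []
    rw [h1]
  have hak1 : ∀ k : Fin Qn, a (k.val + 1) = θ k.succ := by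
    intro k
    have h1 : (⟨min (k.val + 1) Qn, Nat.lt_succ_of_le (min_le_right _ _)⟩ : Fin (Qn + 1))
        = k.succ := Fin.ext (by simp [min_eq_left (Nat.succ_le_of_lt k.isLt)])
    rw [hadef]
    simp only []
    rw [h1]
  have hsum := intervalIntegral.sum_integral_adjacent_intervals
    (a := a) (n := Qn) (μ := volume) (f := g x) (fun k _ => intervalIntegrable_g x _ _)
  have hQG : gaussianQ x
      = Real.pi⁻¹ * ∑ i ∈ Finset.range Qn, ∫ θ' in a i..a (i + 1), g x θ' := by
    rw [craig_eq hx]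
    congr 1
    rw [hsum, ha0, haQ]
    unfold G S
    rw [intervalIntegral.integral_of_le (by linarith), ← integral_Ioc_eq_integral_Ioo]
  rw [hQG]
  calc Real.pi⁻¹ * ∑ i ∈ Finset.range Qn, ∫ θ' in a i..a (i + 1), g x θ'
      ≤ Real.pi⁻¹ * ∑ i ∈ Finset.range Qn,
          (a (i + 1) - a i) * Real.exp (-x ^ 2 / (2 * Real.sin (a (i + 1)) ^ 2)) := by
        apply mul_le_mul_of_nonneg_left _ (by positivity)
        apply Finset.sum_le_sum
        intro i _
        exact interval_bound hx (habound i).1 (hamono (Nat.le_succ i)) (habound (i + 1)).2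
    _ = ∑ i : Fin Qn, (θ i.succ - θ i.castSucc) / Real.pi
          * Real.exp (-(1 / (2 * Real.sin (θ i.succ) ^ 2)) * x ^ 2) := by
        rw [Finset.mul_sum,
          ← Fin.sum_univ_eq_sum_range (fun i => Real.pi⁻¹ *
            ((a (i + 1) - a i) * Real.exp (-x ^ 2 / (2 * Real.sin (a (i + 1)) ^ 2)))) Qn]
        apply Finset.sum_congr rfl
        intro i _
        rw [hak i, hak1 i]
        have harg : -x ^ 2 / (2 * Real.sin (θ i.succ) ^ 2)
            = -(1 / (2 * Real.sin (θ i.succ) ^ 2)) * x ^ 2 := by ring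
        rw [harg]
        ring
end
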